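/- Let n ≥ 2, let w > 0, and let D ∈ M_n(ℝ) be the symmetric matrix with zero diagonal and D_{ij} = 1/w for all i ≠ j (the complete graph with all weights equal to w). Then for all i ≠ j, the noncommutative distance satisfies d^D(i,j) = w·sqrt(2/n). -/

import Mathlib

open scoped ENNReal

/-- The operator norm on square matrices induced by the Euclidean (ℓ²) norm. -/
noncomputable def opNorm {ι : Type*} [Finite ι] (M : Matrix ι ι ℂ) : ℝ :=
  letI := Fintype.ofFinite ι
  letI := Classical.decEq ι
  ‖Matrix.toEuclideanCLM (𝕜 := ℂ) M‖

/-- The commutator `[D, π(a)]` of a matrix with the diagonal matrix of `a`. -/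
noncomputable def commD {ι : Type*} [Finite ι] (D : Matrix ι ι ℂ) (a : ι → ℂ) : Matrix ι ι ℂ :=
  letI := Fintype.ofFinite ι
  letI := Classical.decEq ι
  D * Matrix.diagonal a - Matrix.diagonal a * D

/-- Connes' noncommutative distance associated to the Dirac operator `D`. -/
noncomputable def ncDist {ι : Type*} [Finite ι] (D : Matrix ι ι ℂ) (i j : ι) : ℝ≥0∞ :=
  ⨆ (a : ι → ℂ) (_ : opNorm (commD D a) ≤ 1), ENNReal.ofReal ‖a i - a j‖

/-- The weight of an edge: the inverse of `|D i j|` (infinite if `D i j = 0`). -/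
noncomputable def eWeight {ι : Type*} (D : Matrix ι ι ℂ) (u v : ι) : ℝ≥0∞ :=
  (ENNReal.ofReal ‖D u v‖)⁻¹

/-- Adjacency in the graph `G_D`. -/
def Adjac {ι : Type*} (D : Matrix ι ι ℂ) (u v : ι) : Prop := u ≠ v ∧ D u v ≠ 0

/-- The length of a walk `i :: p` computed with weights `eWeight D`. -/
noncomputable def walkLength {ι : Type*} (D : Matrix ι ι ℂ) : ι → List ι → ℝ≥0∞
  | _, [] => 0
  | u, v :: rest => eWeight D u v + walkLength D v rest

/-- `i :: p` is a walk from `i` to `j` in the graph `G_D`. -/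
def IsWalk {ι : Type*} (D : Matrix ι ι ℂ) (i j : ι) (p : List ι) : Prop :=
  List.Chain (Adjac D) i p ∧ (i :: p).getLast (List.cons_ne_nil _ _) = j

/-- `i` and `j` lie in the same connected component of `G_D`. -/
def Conn {ι : Type*} (D : Matrix ι ι ℂ) (i j : ι) : Prop := ∃ p, IsWalk D i j p

/-- The geodesic (weighted shortest-path) distance on `G_D`. -/
noncomputable def gDist {ι : Type*} (D : Matrix ι ι ℂ) (i j : ι) : ℝ≥0∞ :=
  ⨅ (p : List ι) (_ : IsWalk D i j p), walkLength D i p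



open scoped RealInnerProductSpace

section Aux

lemma key_ineq' {n : ℕ} (hn : 0 < n) (x : Fin n → ℂ) (i j : Fin n) (hij : i ≠ j) :
    ‖x i - x j‖^2 / 2 + ‖∑ k, x k‖^2 / n ≤ ∑ k, ‖x k‖^2 := by
  have hn' : (0:ℝ) < n := Nat.cast_pos.mpr hn
  set S := ∑ k, x k with hS
  set m : ℂ := ((n:ℝ)⁻¹ : ℝ) • S with hm
  have hident : ∑ k, ‖x k - m‖^2 = (∑ k, ‖x k‖^2) - ‖S‖^2 / n := by
    have h1 : ∀ k, ‖x k - m‖^2 = ‖x k‖^2 - 2 * ⟪x k, m⟫ + ‖m‖^2 := fun k =>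
      norm_sub_sq_real (x k) m
    rw [Finset.sum_congr rfl fun k _ => h1 k]
    rw [Finset.sum_add_distrib, Finset.sum_sub_distrib]
    have h2 : ∑ k : Fin n, ⟪x k, m⟫ = (n:ℝ)⁻¹ * ‖S‖^2 := by
      simp_rw [hm, real_inner_smul_right]
      rw [← Finset.mul_sum, ← sum_inner, ← hS, real_inner_self_eq_norm_sq]
    have h3 : ‖m‖^2 = ((n:ℝ)⁻¹)^2 * ‖S‖^2 := by
      rw [hm, norm_smul, Real.norm_eq_abs, abs_of_nonneg (by positivity)]; ring
    have h2' : ∑ k : Fin n, 2 * ⟪x k, m⟫ = 2 * ((n:ℝ)⁻¹ * ‖S‖^2) := by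
      rw [← Finset.mul_sum, h2]
    rw [h2']
    simp only [Finset.sum_const, Finset.card_univ, Fintype.card_fin, nsmul_eq_mul, h3]
    field_simp
    ring
  have h4 : ‖x i - x j‖^2 / 2 ≤ ∑ k, ‖x k - m‖^2 := by
    have e : x i - x j = (x i - m) - (x j - m) := by ring
    have h5 : ‖x i - x j‖ ≤ ‖x i - m‖ + ‖x j - m‖ := by
      rw [e]; exact norm_sub_le _ _
    have h6 : ‖x i - x j‖^2 / 2 ≤ ‖x i - m‖^2 + ‖x j - m‖^2 := by
      nlinarith [h5, sq_nonneg (‖x i - m‖ - ‖x j - m‖), norm_nonneg (x i - x j),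
        norm_nonneg (x i - m), norm_nonneg (x j - m)]
    refine h6.trans ?_
    calc ‖x i - m‖^2 + ‖x j - m‖^2 = ∑ k ∈ ({i,j} : Finset (Fin n)), ‖x k - m‖^2 := by
          rw [Finset.sum_pair hij]
      _ ≤ ∑ k, ‖x k - m‖^2 := Finset.sum_le_sum_of_subset_of_nonneg (Finset.subset_univ _)
          (fun k _ _ => by positivity)
  linarith

lemma commD_eq' {n : ℕ} (D : Matrix (Fin n) (Fin n) ℂ) (a : Fin n → ℂ) :
    commD D a = D * Matrix.diagonal a - Matrix.diagonal a * D := by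
  unfold commD; congr!

lemma commD_apply' {n : ℕ} (D : Matrix (Fin n) (Fin n) ℂ) (a : Fin n → ℂ) (k l : Fin n) :
    commD D a k l = D k l * (a l - a k) := by
  rw [commD_eq']
  simp [Matrix.sub_apply, Matrix.mul_diagonal, Matrix.diagonal_mul]
  ring

lemma opNorm_eq' {n : ℕ} (M : Matrix (Fin n) (Fin n) ℂ) :
    opNorm M = ‖Matrix.toEuclideanCLM (𝕜 := ℂ) M‖ := by
  unfold opNorm; congr!

lemma euclid_apply' {n : ℕ} (M : Matrix (Fin n) (Fin n) ℂ) (x : EuclideanSpace ℂ (Fin n)) :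
    Matrix.toEuclideanCLM (𝕜 := ℂ) M x =
      (WithLp.equiv 2 _).symm (M.mulVec (WithLp.equiv 2 _ x)) := by
  exact Matrix.toEuclideanCLM_toLp (𝕜 := ℂ) M (WithLp.equiv 2 _ x)

lemma enorm_sq' {n : ℕ} (v : Fin n → ℂ) :
    ‖((WithLp.equiv 2 (Fin n → ℂ)).symm v : EuclideanSpace ℂ (Fin n))‖^2 = ∑ k, ‖v k‖^2 := by
  rw [EuclideanSpace.norm_eq, Real.sq_sqrt (by positivity)]
  simp

lemma mulVec_commD' {n : ℕ} (w : ℝ)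
    (D : Matrix (Fin n) (Fin n) ℂ)
    (hD : D = Matrix.of fun i j => if i = j then 0 else (((w⁻¹ : ℝ)) : ℂ))
    (a : Fin n → ℂ) (v : Fin n → ℂ) (k : Fin n) :
    (commD D a).mulVec v k
      = (w⁻¹ : ℝ) * ((∑ l, a l * v l) - a k * ∑ l, v l) := by
  have h : ∀ l, commD D a k l = (w⁻¹ : ℝ) * (a l - a k) := by
    intro l
    rw [commD_apply', hD]
    by_cases hkl : k = l <;> simp [hkl]
  simp only [Matrix.mulVec, dotProduct, h]
  rw [Finset.mul_sum, mul_sub, Finset.mul_sum, Finset.mul_sum, ← Finset.sum_sub_distrib]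
  exact Finset.sum_congr rfl fun l _ => by ring

end Aux

lemma upper_bound' {n : ℕ} (hn : 2 ≤ n) (w : ℝ) (hw : 0 < w)
    (D : Matrix (Fin n) (Fin n) ℂ)
    (hD : D = Matrix.of fun i j => if i = j then 0 else (((w⁻¹ : ℝ)) : ℂ))
    (i j : Fin n) (hij : i ≠ j)
    (a : Fin n → ℂ) (ha : opNorm (commD D a) ≤ 1) :
    ‖a i - a j‖ ≤ w * Real.sqrt (2 / (n : ℝ)) := by
  have hn0 : 0 < n := lt_of_lt_of_le two_pos hn
  have hn' : (0:ℝ) < n := Nat.cast_pos.mpr hn0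
  set v : Fin n → ℂ := fun k => if k = i then 1 else if k = j then -1 else 0 with hv
  set x : EuclideanSpace ℂ (Fin n) := (WithLp.equiv 2 _).symm v with hxdef
  have hx : WithLp.equiv 2 _ x = v := by
    rw [hxdef]; exact (WithLp.equiv 2 _).apply_symm_apply v
  have hs1 : ∑ l, a l * v l = a i - a j := by
    have hpt : ∀ l, a l * v l = (if l = i then a i else 0) + (if l = j then -(a j) else 0) := by
      intro l
      by_cases h1 : l = i
      · subst h1
        simp [hv, hij]
      · by_cases h2 : l = j
        · subst h2; simp [hv, h1]
        · simp [hv, h1, h2]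
    rw [Finset.sum_congr rfl fun l _ => hpt l, Finset.sum_add_distrib]
    simp [sub_eq_add_neg]
  have hs2 : ∑ l, v l = 0 := by
    have hpt : ∀ l, v l = (if l = i then (1:ℂ) else 0) + (if l = j then -1 else 0) := by
      intro l
      by_cases h1 : l = i
      · subst h1
        simp [hv, hij]
      · by_cases h2 : l = j
        · subst h2; simp [hv, h1]
        · simp [hv, h1, h2]
    rw [Finset.sum_congr rfl fun l _ => hpt l, Finset.sum_add_distrib]
    simp
  have himg : ∀ k, (commD D a).mulVec v k = ((w⁻¹ : ℝ) : ℂ) * (a i - a j) := by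
    intro k
    rw [mulVec_commD' w D hD, hs1, hs2]
    ring
  have hCx : ‖Matrix.toEuclideanCLM (𝕜 := ℂ) (commD D a) x‖^2
      = n * ((w⁻¹)^2 * ‖a i - a j‖^2) := by
    rw [euclid_apply', hx, enorm_sq']
    rw [Finset.sum_congr rfl fun k _ => congrArg (fun z => ‖z‖^2) (himg k)]
    simp only [Finset.sum_const, Finset.card_univ, Fintype.card_fin, nsmul_eq_mul]
    rw [norm_mul, Complex.norm_real, Real.norm_eq_abs, abs_of_pos (by positivity)]
    ring
  have hxn : ‖x‖^2 = 2 := by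
    rw [hxdef, enorm_sq']
    have hpt : ∀ l, ‖v l‖^2 = (if l = i then (1:ℝ) else 0) + (if l = j then 1 else 0) := by
      intro l
      by_cases h1 : l = i
      · subst h1
        simp [hv, hij]
      · by_cases h2 : l = j
        · subst h2; simp [hv, h1]
        · simp [hv, h1, h2]
    rw [Finset.sum_congr rfl fun l _ => hpt l, Finset.sum_add_distrib]
    norm_num
  have hle : ‖Matrix.toEuclideanCLM (𝕜 := ℂ) (commD D a) x‖ ≤ ‖x‖ := by
    calc ‖Matrix.toEuclideanCLM (𝕜 := ℂ) (commD D a) x‖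
        ≤ ‖Matrix.toEuclideanCLM (𝕜 := ℂ) (commD D a)‖ * ‖x‖ :=
          ContinuousLinearMap.le_opNorm _ _
      _ ≤ 1 * ‖x‖ := by
          apply mul_le_mul_of_nonneg_right _ (norm_nonneg x)
          rw [← opNorm_eq']; exact ha
      _ = ‖x‖ := one_mul _
  have hsq : ‖a i - a j‖^2 ≤ (w * Real.sqrt (2 / (n:ℝ)))^2 := by
    have h1 : ‖Matrix.toEuclideanCLM (𝕜 := ℂ) (commD D a) x‖^2 ≤ ‖x‖^2 := by
      nlinarith [norm_nonneg (Matrix.toEuclideanCLM (𝕜 := ℂ) (commD D a) x), norm_nonneg x, hle]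
    rw [hCx, hxn] at h1
    rw [mul_pow, Real.sq_sqrt (by positivity : (0:ℝ) ≤ 2 / (n:ℝ))]
    have hw2 : (0:ℝ) < w^2 := by positivity
    rw [div_eq_mul_inv]
    have hinv : (w⁻¹)^2 = (w^2)⁻¹ := by rw [inv_pow]
    rw [hinv] at h1
    have hww : w^2 * (w^2)⁻¹ = 1 := mul_inv_cancel₀ hw2.ne'
    have hgoal : w^2 * (2 * (n:ℝ)⁻¹) = 2 * w^2 / n := by field_simp
    rw [hgoal, le_div_iff₀ hn']
    nlinarith [h1, hww, hn', sq_nonneg ‖a i - a j‖]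
  have := Real.sqrt_le_sqrt hsq
  rwa [Real.sqrt_sq (norm_nonneg _), Real.sqrt_sq (by positivity)] at this

lemma sqrt_two_div {n : ℕ} (hn : 0 < n) (w : ℝ) (hw : 0 < w) :
    2 * (w / Real.sqrt (2 * n)) = w * Real.sqrt (2 / (n : ℝ)) := by
  have hn' : (0:ℝ) < n := Nat.cast_pos.mpr hn
  have h1 : Real.sqrt (2 / (n:ℝ)) = 2 / Real.sqrt (2 * n) := by
    have h2 : (2:ℝ) / (n:ℝ) = 2^2 / (2 * n) := by field_simp
    rw [h2, Real.sqrt_div (by positivity), Real.sqrt_sq (by norm_num)]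
  rw [h1]; ring

lemma lower_bound' {n : ℕ} (hn : 2 ≤ n) (w : ℝ) (hw : 0 < w)
    (D : Matrix (Fin n) (Fin n) ℂ)
    (hD : D = Matrix.of fun i j => if i = j then 0 else (((w⁻¹ : ℝ)) : ℂ))
    (i j : Fin n) (hij : i ≠ j) :
    ∃ a : Fin n → ℂ, opNorm (commD D a) ≤ 1 ∧
      ‖a i - a j‖ = w * Real.sqrt (2 / (n : ℝ)) := by
  have hn0 : 0 < n := lt_of_lt_of_le two_pos hn
  have hn' : (0:ℝ) < n := Nat.cast_pos.mpr hn0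
  set t : ℝ := w / Real.sqrt (2 * n) with htdef
  have ht : 0 < t := div_pos hw (Real.sqrt_pos.mpr (by positivity))
  have ht2 : t^2 = w^2 / (2 * n) := by
    rw [htdef, div_pow, Real.sq_sqrt (by positivity)]
  set a : Fin n → ℂ := fun k => if k = i then (t:ℂ) else if k = j then -(t:ℂ) else 0 with ha
  refine ⟨a, ?_, ?_⟩
  · rw [opNorm_eq']
    refine ContinuousLinearMap.opNorm_le_bound _ zero_le_one fun x => ?_
    rw [one_mul, euclid_apply']
    set v : Fin n → ℂ := WithLp.equiv 2 _ x with hvdef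
    have hxv : x = (WithLp.equiv 2 _).symm v := by
      rw [hvdef]; exact ((WithLp.equiv 2 _).symm_apply_apply x).symm
    -- work with squares
    have hsq : ∀ u u' : ℝ, 0 ≤ u → 0 ≤ u' → u^2 ≤ u'^2 → u ≤ u' := by
      intro u u' hu hu' h
      have := Real.sqrt_le_sqrt h
      rwa [Real.sqrt_sq hu, Real.sqrt_sq hu'] at this
    refine hsq _ _ (norm_nonneg _) (norm_nonneg _) ?_
    rw [enorm_sq', hxv, enorm_sq']
    set S : ℂ := ∑ l, v l with hS
    set s : ℂ := ∑ l, a l * v l with hs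
    have hsval : s = (t:ℂ) * (v i - v j) := by
      rw [hs]
      have hpt : ∀ l, a l * v l
          = (if l = i then (t:ℂ) * v i else 0) + (if l = j then -((t:ℂ) * v j) else 0) := by
        intro l
        by_cases h1 : l = i
        · subst h1; simp [ha, hij]
        · by_cases h2 : l = j
          · subst h2; simp [ha, h1]
          · simp [ha, h1, h2]
      rw [Finset.sum_congr rfl fun l _ => hpt l, Finset.sum_add_distrib]
      simp
      ring
    have hmv : ∀ k, (commD D a).mulVec v k = ((w⁻¹:ℝ):ℂ) * (s - a k * S) := by
      intro k
      rw [mulVec_commD' w D hD, ← hs, ← hS]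
    -- sum of squares of image
    have hterm : ∀ k, ‖(commD D a).mulVec v k‖^2 = (w⁻¹)^2 * ‖s - a k * S‖^2 := by
      intro k
      rw [hmv k, norm_mul, Complex.norm_real, Real.norm_eq_abs,
        abs_of_pos (by positivity), mul_pow]
    have hpar : ‖s - (t:ℂ)*S‖^2 + ‖s + (t:ℂ)*S‖^2 = 2*‖s‖^2 + 2*(t^2*‖S‖^2) := by
      have h1 := norm_add_sq_real s ((t:ℂ)*S)
      have h2 := norm_sub_sq_real s ((t:ℂ)*S)
      have h3 : ‖(t:ℂ)*S‖^2 = t^2 * ‖S‖^2 := by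
        rw [norm_mul, Complex.norm_real, Real.norm_eq_abs, abs_of_pos ht, mul_pow]
      linarith
    have hsum : ∑ k, ‖s - a k * S‖^2 = (n:ℝ)*‖s‖^2 + 2*(t^2*‖S‖^2) := by
      have hpt : ∀ k, ‖s - a k * S‖^2 = ‖s‖^2
          + ((if k = i then ‖s - (t:ℂ)*S‖^2 - ‖s‖^2 else 0)
            + (if k = j then ‖s + (t:ℂ)*S‖^2 - ‖s‖^2 else 0)) := by
        intro k
        by_cases h1 : k = i
        · subst h1
          have : a k = (t:ℂ) := by simp [ha]
          rw [this]
          simp [hij]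
        · by_cases h2 : k = j
          · subst h2
            have e1 : a k = -(t:ℂ) := by simp [ha, h1]
            have e2 : s - a k * S = s + (t:ℂ)*S := by rw [e1]; ring
            rw [e2]
            simp [h1]
          · have : a k = 0 := by simp [ha, h1, h2]
            rw [this]
            simp [h1, h2]
      rw [Finset.sum_congr rfl fun k _ => hpt k, Finset.sum_add_distrib,
        Finset.sum_add_distrib]
      simp only [Finset.sum_ite_eq', Finset.mem_univ, if_true, Finset.sum_const,
        Finset.card_univ, Fintype.card_fin, nsmul_eq_mul]
      linarith
    calc ∑ k, ‖(commD D a).mulVec v k‖^2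
        = (w⁻¹)^2 * ((n:ℝ)*‖s‖^2 + 2*(t^2*‖S‖^2)) := by
          rw [Finset.sum_congr rfl fun k _ => hterm k, ← Finset.mul_sum, hsum]
      _ = ‖v i - v j‖^2/2 + ‖S‖^2/(n:ℝ) := by
          have h3 : ‖s‖^2 = t^2 * ‖v i - v j‖^2 := by
            rw [hsval, norm_mul, Complex.norm_real, Real.norm_eq_abs,
              abs_of_pos ht, mul_pow]
          rw [h3, ht2]
          field_simp
      _ ≤ ∑ k, ‖v k‖^2 := key_ineq' hn0 v i j hij
  · have hvij : a i - a j = ((2*t : ℝ) : ℂ) := by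
      have h1 : a i = (t:ℂ) := by simp [ha]
      have h2 : a j = -(t:ℂ) := by simp [ha, hij.symm]
      rw [h1, h2]
      push_cast
      ring
    rw [hvij, Complex.norm_real, Real.norm_eq_abs, abs_of_pos (by positivity),
      sqrt_two_div hn0 w hw]

lemma ncDist_eq' {n : ℕ} (D : Matrix (Fin n) (Fin n) ℂ) (i j : Fin n) :
    ncDist D i j = ⨆ (a : Fin n → ℂ) (_ : opNorm (commD D a) ≤ 1),
      ENNReal.ofReal ‖a i - a j‖ := rfl

theorem stmt8 {n : ℕ} (hn : 2 ≤ n) (w : ℝ) (hw : 0 < w)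
    (D : Matrix (Fin n) (Fin n) ℂ)
    (hD : D = Matrix.of fun i j => if i = j then 0 else (((w⁻¹ : ℝ)) : ℂ))
    (i j : Fin n) (hij : i ≠ j) :
    ncDist D i j = ENNReal.ofReal (w * Real.sqrt (2 / (n : ℝ))) := by
  rw [ncDist_eq']
  apply le_antisymm
  · exact iSup₂_le fun a ha =>
      ENNReal.ofReal_le_ofReal (upper_bound' hn w hw D hD i j hij a ha)
  · obtain ⟨a, h1, h2⟩ := lower_bound' hn w hw D hD i j hij
    exact le_iSup₂_of_le a h1 (le_of_eq (by rw [h2]))
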